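/- The half-twist squares to a scalar: with σ_1 = diag(q^{(α+1)²/2}, q^{(α−1)²/2}) and σ_2 = A^{−1} σ_1 A for A = (1/[2α])·[[−[α+1], [3α+3]],[[α+1],[α+1]]], one has (σ_1σ_2σ_1)² = i e^{(3/2)iπα²} · Id, where q^x = e^{iπx/2} and [x] = (q^x − q^{−x})/(q − q^{−1}). -/

import Mathlib

open Matrix Complex

/-- `q^x = e^{iπx/2}` -/
noncomputable def qpow (x : ℂ) : ℂ := Complex.exp (Real.pi * Complex.I * x / 2)

/-- quantum integer `[x] = (q^x - q^{-x})/(q - q^{-1})` -/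
noncomputable def qint (x : ℂ) : ℂ := (qpow x - qpow (-x)) / (qpow 1 - qpow (-1))

set_option maxHeartbeats 1000000 in
/-- The half-twist squares to the scalar `i e^{3iπα²/2}`. -/
theorem half_twist_squared (α : ℝ) (hα : Irrational α)
    (σ₁ A σ₂ : Matrix (Fin 2) (Fin 2) ℂ)
    (hσ₁ : σ₁ = !![qpow (((α : ℂ) + 1) ^ 2 / 2), 0; 0, qpow (((α : ℂ) - 1) ^ 2 / 2)])
    (hA : A = (qint (2 * (α : ℂ)))⁻¹ •
      !![-(qint ((α : ℂ) + 1)), qint (3 * (α : ℂ) + 3);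
         qint ((α : ℂ) + 1), qint ((α : ℂ) + 1)])
    (hσ₂ : σ₂ = A⁻¹ * σ₁ * A) :
    (σ₁ * σ₂ * σ₁) ^ 2 =
      (Complex.I * Complex.exp (3 * Real.pi * Complex.I * (α : ℂ) ^ 2 / 2)) •
        (1 : Matrix (Fin 2) (Fin 2) ℂ) := by
  have hπ : (Real.pi : ℂ) ≠ 0 := by exact_mod_cast Real.pi_ne_zero
  set t : ℂ := Complex.exp ((Real.pi : ℂ) * Complex.I * (α : ℂ) / 2) with ht
  set s : ℂ := Complex.exp ((Real.pi : ℂ) * Complex.I * ((α : ℂ) ^ 2 + 1) / 4) with hs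
  have ht0 : t ≠ 0 := Complex.exp_ne_zero _
  have hs0 : s ≠ 0 := Complex.exp_ne_zero _
  have e2 : ∀ z : ℂ, Complex.exp (2 * z) = Complex.exp z ^ 2 := fun z => by
    rw [show (2:ℂ) * z = ((2:ℕ):ℂ) * z by norm_num, Complex.exp_nat_mul]
  have e3 : ∀ z : ℂ, Complex.exp (3 * z) = Complex.exp z ^ 3 := fun z => by
    rw [show (3:ℂ) * z = ((3:ℕ):ℂ) * z by norm_num, Complex.exp_nat_mul]
  have e4 : ∀ z : ℂ, Complex.exp (4 * z) = Complex.exp z ^ 4 := fun z => by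
    rw [show (4:ℂ) * z = ((4:ℕ):ℂ) * z by norm_num, Complex.exp_nat_mul]
  have e6 : ∀ z : ℂ, Complex.exp (6 * z) = Complex.exp z ^ 6 := fun z => by
    rw [show (6:ℂ) * z = ((6:ℕ):ℂ) * z by norm_num, Complex.exp_nat_mul]
  have hI : Complex.exp ((Real.pi : ℂ) * Complex.I / 2) = Complex.I := by
    rw [show ((Real.pi:ℂ) * Complex.I / 2) = ((Real.pi/2 : ℝ) : ℂ) * Complex.I by
        push_cast; ring,
      Complex.exp_mul_I, ← Complex.ofReal_cos, ← Complex.ofReal_sin,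
      Real.cos_pi_div_two, Real.sin_pi_div_two]
    simp
  have hI3 : Complex.I ^ 3 = -Complex.I := by
    rw [pow_succ, Complex.I_sq]; ring
  have ht4 : t ^ 4 ≠ 1 := by
    intro h
    rw [ht, ← e4, Complex.exp_eq_one_iff] at h
    obtain ⟨n, hn⟩ := h
    have h2 : (2 : ℂ) * Real.pi * Complex.I ≠ 0 := by
      simp [hπ, Complex.I_ne_zero]
    have hc : (2 : ℂ) * Real.pi * Complex.I * (α : ℂ)
        = 2 * Real.pi * Complex.I * (n : ℂ) := by linear_combination hn
    have : (α : ℂ) = (n : ℂ) := mul_left_cancel₀ h2 hc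
    exact hα.ne_int n (by exact_mod_cast this)
  have h4 : t ^ 4 - 1 ≠ 0 := sub_ne_zero_of_ne ht4
  have hneg : ∀ x : ℂ, qpow (-x) = (qpow x)⁻¹ := fun x => by
    rw [qpow, qpow, show ((Real.pi:ℂ) * Complex.I * (-x) / 2)
      = -((Real.pi:ℂ) * Complex.I * x / 2) by ring, Complex.exp_neg]
  have hq1 : qpow 1 = Complex.I := by
    rw [qpow, mul_one, hI]
  have hQ : qpow 1 - qpow (-1) = 2 * Complex.I := by
    rw [hneg, hq1, Complex.inv_I]; ring
  have hqa1 : qpow ((α : ℂ) + 1) = Complex.I * t := by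
    rw [qpow, show ((Real.pi:ℂ) * Complex.I * ((α:ℂ)+1) / 2)
      = (Real.pi:ℂ) * Complex.I / 2 + (Real.pi:ℂ) * Complex.I * (α:ℂ) / 2 by ring,
      Complex.exp_add, hI, ← ht]
  have hqa3 : qpow (3 * (α : ℂ) + 3) = -Complex.I * t ^ 3 := by
    rw [qpow, show ((Real.pi:ℂ) * Complex.I * (3*(α:ℂ)+3) / 2)
      = 3 * ((Real.pi:ℂ) * Complex.I / 2) + 3 * ((Real.pi:ℂ) * Complex.I * (α:ℂ) / 2) by ring,
      Complex.exp_add, e3, e3, hI, ← ht, hI3]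
  have hq2a : qpow (2 * (α : ℂ)) = t ^ 2 := by
    rw [qpow, show ((Real.pi:ℂ) * Complex.I * (2*(α:ℂ)) / 2)
      = 2 * ((Real.pi:ℂ) * Complex.I * (α:ℂ) / 2) by ring, e2, ← ht]
  have hs1 : qpow (((α : ℂ) + 1) ^ 2 / 2) = s * t := by
    rw [qpow, show ((Real.pi:ℂ) * Complex.I * (((α:ℂ)+1)^2/2) / 2)
      = (Real.pi:ℂ) * Complex.I * ((α:ℂ)^2+1) / 4 + (Real.pi:ℂ) * Complex.I * (α:ℂ) / 2 by ring,
      Complex.exp_add, ← hs, ← ht]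
  have hs2 : qpow (((α : ℂ) - 1) ^ 2 / 2) = s * t⁻¹ := by
    rw [qpow, show ((Real.pi:ℂ) * Complex.I * (((α:ℂ)-1)^2/2) / 2)
      = (Real.pi:ℂ) * Complex.I * ((α:ℂ)^2+1) / 4 + -((Real.pi:ℂ) * Complex.I * (α:ℂ) / 2) by ring,
      Complex.exp_add, Complex.exp_neg, ← hs, ← ht]
  have hE : Complex.I * Complex.exp (3 * (Real.pi : ℂ) * Complex.I * (α : ℂ) ^ 2 / 2)
      = -s ^ 6 := by
    have h6 : s ^ 6
        = Complex.exp (3 * (Real.pi:ℂ) * Complex.I * (α:ℂ) ^ 2 / 2) * -Complex.I := by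
      rw [hs, ← e6, show (6:ℂ) * ((Real.pi:ℂ) * Complex.I * ((α:ℂ)^2+1) / 4)
        = 3 * (Real.pi:ℂ) * Complex.I * (α:ℂ)^2/2 + 3 * ((Real.pi:ℂ) * Complex.I / 2) by ring,
        Complex.exp_add, e3, hI, hI3]
    rw [h6]; ring
  have ha : qint ((α : ℂ) + 1) = (t ^ 2 + 1) / (2 * t) := by
    rw [qint, hQ, hneg, hqa1, mul_inv, Complex.inv_I]
    field_simp
    ring
  have hb : qint (3 * (α : ℂ) + 3) = -(t ^ 6 + 1) / (2 * t ^ 3) := by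
    rw [qint, hQ, hneg, hqa3]
    rw [show (-Complex.I * t ^ 3)⁻¹ = Complex.I * (t ^ 3)⁻¹ by
      rw [mul_inv, inv_neg, Complex.inv_I]; ring]
    field_simp
    ring
  set k : ℂ := qint (2 * (α : ℂ)) with hk
  have hd : k = (t ^ 4 - 1) / (2 * Complex.I * t ^ 2) := by
    rw [hk, qint, hQ, hneg, hq2a]
    field_simp
  have hd0 : k ≠ 0 := by
    rw [hd]
    exact div_ne_zero h4 (by simp [Complex.I_ne_zero, ht0])
  -- polynomial versions of the matrices
  set D : Matrix (Fin 2) (Fin 2) ℂ := !![t ^ 2, 0; 0, 1] with hD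
  set A₀ : Matrix (Fin 2) (Fin 2) ℂ :=
    !![-((t ^ 2 + 1) * t ^ 2), -(t ^ 6 + 1);
       (t ^ 2 + 1) * t ^ 2, (t ^ 2 + 1) * t ^ 2] with hA₀
  have hσ₁' : σ₁ = (s * t⁻¹) • D := by
    rw [hσ₁, hs1, hs2, hD]
    ext i j
    fin_cases i <;> fin_cases j <;> simp <;> field_simp <;> ring
  have hA' : A = (k⁻¹ * (2 * t ^ 3)⁻¹) • A₀ := by
    rw [hA, ha, hb, hA₀, ← smul_smul]
    congr 1
    ext i j
    fin_cases i <;> fin_cases j <;> simp <;> field_simp <;> (first | ring1 | (left; first | ring1 | trivial))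
  set B : Matrix (Fin 2) (Fin 2) ℂ := (-2 * t * k / (t ^ 4 - 1) ^ 2) • A₀ with hB
  have hA₀2 : A₀ * A₀ = (-(t ^ 2 * (t ^ 4 - 1) ^ 2)) • 1 := by
    rw [hA₀]
    ext i j
    fin_cases i <;> fin_cases j <;>
      simp [Matrix.mul_apply, Fin.sum_univ_two, Matrix.one_apply] <;> ring
  have hAB : A * B = 1 := by
    rw [hA', hB, Matrix.smul_mul, Matrix.mul_smul, hA₀2, smul_smul, smul_smul]
    rw [show k⁻¹ * (2 * t ^ 3)⁻¹ * (-2 * t * k / (t ^ 4 - 1) ^ 2) * -(t ^ 2 * (t ^ 4 - 1) ^ 2)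
        = 1 by field_simp [hd0, ht0, h4], one_smul]
  have hAinv : A⁻¹ = B := Matrix.inv_eq_right_inv hAB
  set N : Matrix (Fin 2) (Fin 2) ℂ := D * (A₀ * (D * (A₀ * D))) with hN
  have h1 : σ₁ * σ₂ * σ₁
      = ((s * t⁻¹) ^ 3 * (-2 * t * k / (t ^ 4 - 1) ^ 2) * (k⁻¹ * (2 * t ^ 3)⁻¹)) • N := by
    rw [hσ₂, hAinv, hA', hσ₁', hB, hN]
    simp only [Matrix.smul_mul, Matrix.mul_smul, smul_smul, Matrix.mul_assoc]
    exact congrArg (· • (D * (A₀ * (D * (A₀ * D))))) (by field_simp)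
  have hNN : N * N = (-(t ^ 10 * (t ^ 4 - 1) ^ 4)) • 1 := by
    rw [hN, hD, hA₀]
    ext i j
    fin_cases i <;> fin_cases j <;>
      simp [Matrix.mul_apply, Fin.sum_univ_two, Matrix.one_apply] <;> ring
  rw [hE, h1, smul_pow, pow_two N, hNN, smul_smul]
  exact congrArg (· • (1 : Matrix (Fin 2) (Fin 2) ℂ))
    (by field_simp [hd0, ht0, h4, hs0])
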